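/- Let A ⊆ B be an extension of commutative rings, let k ≥ 1 and n ≥ 2 be integers, let a_{ij} ∈ A for 1 ≤ i ≤ k+1 and 1 ≤ j ≤ n, and let s_0, …, s_k ∈ B. Assume that a_{i+1,j}·s_p + a_{i,j}·s_{p+1} ∈ A for all 1 ≤ i ≤ k, 1 ≤ j ≤ n and 0 ≤ p ≤ k−1. Then for all 0 ≤ i, j, l, m ≤ k with l + m = i + j, the element a_{11}^{|i−l|}·(s_i·s_j − s_l·s_m) lies in the A-submodule of B generated by 1, s_0, s_1, …, s_k. -/

import Mathlib

theorem stmt_4 {B : Type*} [CommRing B] (A : Subring B)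
    (k n : ℕ) (hk : 1 ≤ k) (hn : 2 ≤ n)
    (a : ℕ → ℕ → B) (s : ℕ → B)
    (ha : ∀ i j, 1 ≤ i → i ≤ k + 1 → 1 ≤ j → j ≤ n → a i j ∈ A)
    (hlin : ∀ i j p, 1 ≤ i → i ≤ k → 1 ≤ j → j ≤ n → p ≤ k - 1 →
      a (i + 1) j * s p + a i j * s (p + 1) ∈ A) :
    ∀ i j l m, i ≤ k → j ≤ k → l ≤ k → m ≤ k → l + m = i + j →
      a 1 1 ^ (((i : ℤ) - (l : ℤ)).natAbs) * (s i * s j - s l * s m) ∈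
        Submodule.span A (({1} : Set B) ∪ {x | ∃ p ≤ k, x = s p}) := by
  intro i j l m hi hj hl hm hsum
  set S := Submodule.span A (({1} : Set B) ∪ {x | ∃ p ≤ k, x = s p}) with hS
  have hsS : ∀ p, p ≤ k → s p ∈ S := fun p hp => Submodule.subset_span (Or.inr ⟨p, hp, rfl⟩)
  have hmul : ∀ b, b ∈ A → ∀ x, x ∈ S → b * x ∈ S := by
    intro b hb x hx
    exact S.smul_mem ⟨b, hb⟩ hx
  have ha11 : a 1 1 ∈ A := ha 1 1 le_rfl (by omega) le_rfl (by omega)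
  have hadj : ∀ i j, 1 ≤ i → i ≤ k → j + 1 ≤ k →
      a 1 1 * (s i * s j - s (i - 1) * s (j + 1)) ∈ S := by
    intro i j h1 h2 h3
    obtain ⟨i', rfl⟩ : ∃ i', i = i' + 1 := ⟨i - 1, by omega⟩
    have h4 : a 2 1 * s i' + a 1 1 * s (i' + 1) ∈ A :=
      hlin 1 1 i' le_rfl hk le_rfl (by omega) (by omega)
    have h5 : a 2 1 * s j + a 1 1 * s (j + 1) ∈ A :=
      hlin 1 1 j le_rfl hk le_rfl (by omega) (by omega)
    have key : a 1 1 * (s (i' + 1) * s j - s (i' + 1 - 1) * s (j + 1)) =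
        (a 2 1 * s i' + a 1 1 * s (i' + 1)) * s j
          - (a 2 1 * s j + a 1 1 * s (j + 1)) * s i' := by
      simp only [Nat.add_sub_cancel]; ring
    rw [key]
    exact S.sub_mem
      (by simpa [mul_comm] using hmul _ h4 _ (hsS j (by omega)))
      (by simpa [mul_comm] using hmul _ h5 _ (hsS i' (by omega)))
  have aux : ∀ d l j m, l + d ≤ k → j ≤ k → m ≤ k → l + m = (l + d) + j →
      a 1 1 ^ d * (s (l + d) * s j - s l * s m) ∈ S := by
    intro d
    induction d with
    | zero =>
      intro l j m h1 h2 h3 h4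
      have : m = j := by omega
      subst this
      simp
    | succ d ih =>
      intro l j m h1 h2 h3 h4
      have hjk : j + 1 ≤ k := by omega
      have key : a 1 1 ^ (d + 1) * (s (l + (d + 1)) * s j - s l * s m) =
          a 1 1 ^ d * (a 1 1 * (s (l + (d + 1)) * s j - s (l + (d + 1) - 1) * s (j + 1)))
            + a 1 1 * (a 1 1 ^ d * (s (l + d) * s (j + 1) - s l * s m)) := by
        have h5 : l + (d + 1) - 1 = l + d := by omega
        rw [h5]; ring
      rw [key]
      exact S.add_mem
        (hmul _ (pow_mem ha11 d) _ (hadj _ _ (by omega) (by omega) hjk))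
        (hmul _ ha11 _ (ih l (j + 1) m (by omega) hjk h3 (by omega)))
  rcases le_total l i with h | h
  · obtain ⟨d, rfl⟩ : ∃ d, i = l + d := ⟨i - l, by omega⟩
    have hd : (((l + d : ℕ) : ℤ) - (l : ℤ)).natAbs = d := by omega
    rw [hd]
    exact aux d l j m hi hj hm hsum
  · obtain ⟨d, rfl⟩ : ∃ d, l = i + d := ⟨l - i, by omega⟩
    have hd : (((i : ℕ) : ℤ) - ((i + d : ℕ) : ℤ)).natAbs = d := by omega
    rw [hd]
    have := aux d i m j hl hm hj (by omega)
    have key : a 1 1 ^ d * (s i * s j - s (i + d) * s m) =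
        -(a 1 1 ^ d * (s (i + d) * s m - s i * s j)) := by ring
    rw [key]
    exact S.neg_mem this
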